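/- For every λ > 0, the median of Z_λ = N_λ + U satisfies −log 2 ≤ Me_{Z_λ} − λ ≤ 4/3. -/

import Mathlib

open MeasureTheory ProbabilityTheory Filter Real Set
open scoped ENNReal NNReal

/-- Distribution of `Z_λ = N_λ + U`, `N_λ` Poisson(λ), `U` uniform on `(0,1)`, independent. -/
noncomputable def zMeasure (l : ℝ) : Measure ℝ :=
  Measure.map (fun p : ℝ × ℝ => p.1 + p.2)
    ((Measure.map (Nat.cast : ℕ → ℝ) (poissonMeasure l.toNNReal)).prod
      (volume.restrict (Set.Ioo (0 : ℝ) 1)))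

/-- The median of `Z_λ`: `inf {t : P(Z_λ ≤ t) ≥ 1/2}`. -/
noncomputable def medianZ (l : ℝ) : ℝ :=
  sInf {t : ℝ | (1 : ℝ≥0∞) / 2 ≤ zMeasure l (Set.Iic t)}

/-- The function `H` of the main theorem. -/
noncomputable def Hfun (x : ℝ) : ℝ :=
  if x ≤ 2 / 3 then x ^ 2 * (x - 1) / 3 + 4 / 135
  else x / 3 * (x ^ 2 - 4 * x + 5) - 86 / 135

/-- `w_n(x,k) = P(Z_{n+x} ≤ n + x + 1/3 + k/(n+x))`. -/
noncomputable def w (n : ℕ) (x k : ℝ) : ℝ :=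
  (zMeasure (n + x) (Set.Iic ((n : ℝ) + x + 1 / 3 + k / (n + x)))).toReal

/-- `r_n(x,k) = k/(n+x)`. -/
noncomputable def r (n : ℕ) (x k : ℝ) : ℝ := k / (n + x)

/-- `g_n(u) = e^{-u} u^n`. -/
noncomputable def g (n : ℕ) (u : ℝ) : ℝ := Real.exp (-u) * u ^ n

/-- `c_n(v,x) = ((n+v+x)/(n+1+x))^{n+1} e^{1-v}`. -/
noncomputable def c (n : ℕ) (v x : ℝ) : ℝ :=
  (((n : ℝ) + v + x) / ((n : ℝ) + 1 + x)) ^ (n + 1) * Real.exp (1 - v)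

/-- `Δ_n(x,k) = ((n+1)!/g_{n+1}(n+1+x)) (w_{n+1}(x,k) - w_n(x,k))`. -/
noncomputable def Δfun (n : ℕ) (x k : ℝ) : ℝ :=
  ((n + 1).factorial : ℝ) / g (n + 1) ((n : ℝ) + 1 + x) * (w (n + 1) x k - w n x k)



noncomputable def pois (l : ℝ) (k : ℕ) : ℝ := Real.exp (-l) * l ^ k / k.factorial

lemma pois_nonneg {l : ℝ} (hl : 0 ≤ l) (k : ℕ) : 0 ≤ pois l k := by
  unfold pois; positivity

lemma pois_pos {l : ℝ} (hl : 0 < l) (k : ℕ) : 0 < pois l k := by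
  unfold pois; positivity

lemma pois_succ (l : ℝ) (m : ℕ) : pois l (m+1) = pois l m * (l / (m+1)) := by
  unfold pois
  rw [Nat.factorial_succ]
  push_cast
  field_simp
  ring

lemma hasDerivAt_pois_zero (l : ℝ) : HasDerivAt (fun x => pois x 0) (-(pois l 0)) l := by
  unfold pois
  simp only [pow_zero, Nat.factorial_zero, Nat.cast_one, mul_one, div_one]
  exact ((Real.hasDerivAt_exp (-l)).comp l ((hasDerivAt_id l).neg)).congr_deriv (by simp)

lemma hasDerivAt_pois_succ (l : ℝ) (m : ℕ) :
    HasDerivAt (fun x => pois x (m+1)) (pois l m - pois l (m+1)) l := by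
  unfold pois
  have h1 : HasDerivAt (fun x : ℝ => Real.exp (-x)) (-Real.exp (-l)) l := by
    exact ((Real.hasDerivAt_exp (-l)).comp l ((hasDerivAt_id l).neg)).congr_deriv (by simp)
  have h2 : HasDerivAt (fun x : ℝ => x ^ (m+1)) ((m+1 : ℕ) * l ^ m) l := by
    simpa using hasDerivAt_pow (m+1) l
  have h := (h1.mul h2).div_const ((m+1).factorial : ℝ)
  refine h.congr_deriv ?_
  rw [Nat.factorial_succ]
  push_cast
  field_simp
  ring

lemma hasDerivAt_sumPois (n : ℕ) (l : ℝ) :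
    HasDerivAt (fun x => ∑ k ∈ Finset.range (n+1), pois x k) (-(pois l n)) l := by
  induction n with
  | zero => simpa using hasDerivAt_pois_zero l
  | succ m ih =>
      have h := ih.add (hasDerivAt_pois_succ l m)
      have heq : (fun x => ∑ k ∈ Finset.range (m+2), pois x k) =
          (fun x => (∑ k ∈ Finset.range (m+1), pois x k) + pois x (m+1)) := by
        funext x; rw [Finset.sum_range_succ]
      rw [heq]
      refine h.congr_deriv ?_
      ring


lemma integrableOn_exp_neg_pow (n : ℕ) {l : ℝ} (hl : 0 ≤ l) :
    IntegrableOn (fun t => Real.exp (-t) * t ^ n) (Ioi l) := by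
  have h := Real.GammaIntegral_convergent (s := n + 1) (by positivity)
  have heq : EqOn (fun x : ℝ => Real.exp (-x) * x ^ ((n : ℝ) + 1 - 1))
      (fun t => Real.exp (-t) * t ^ n) (Ioi 0) := by
    intro x hx
    simp only []
    rw [show (n : ℝ) + 1 - 1 = (n : ℝ) by ring, Real.rpow_natCast]
  have h2 : IntegrableOn (fun t => Real.exp (-t) * t ^ n) (Ioi 0) :=
    (integrableOn_congr_fun heq measurableSet_Ioi).mp h
  exact h2.mono_set (Ioi_subset_Ioi hl)

lemma integral_Ioi_exp_pow (n : ℕ) {l : ℝ} (hl : 0 ≤ l) :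
    ∫ t in Ioi l, Real.exp (-t) * t ^ n
      = (n.factorial : ℝ) * ∑ k ∈ Finset.range (n+1), pois l k := by
  set G : ℝ → ℝ := fun x => -((n.factorial : ℝ) * ∑ k ∈ Finset.range (n+1), pois x k) with hG
  have hderiv : ∀ x : ℝ, HasDerivAt G (Real.exp (-x) * x ^ n) x := by
    intro x
    have h := ((hasDerivAt_sumPois n x).const_mul (n.factorial : ℝ)).neg
    refine h.congr_deriv ?_
    unfold pois
    field_simp
  have htend : Tendsto G atTop (nhds 0) := by
    have hterm : ∀ k ∈ Finset.range (n+1), Tendsto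
        (fun x : ℝ => pois x k) atTop (nhds 0) := by
      intro k _
      have := (tendsto_pow_mul_exp_neg_atTop_nhds_zero k).div_const (k.factorial : ℝ)
      simp only [zero_div] at this
      apply this.congr
      intro x; unfold pois; ring
    have hsum := tendsto_finset_sum (Finset.range (n+1)) hterm
    simp only [Finset.sum_const_zero] at hsum
    have := (hsum.const_mul (n.factorial : ℝ)).neg
    simpa using this
  have := integral_Ioi_of_hasDerivAt_of_tendsto
    (f := G) (f' := fun t => Real.exp (-t) * t ^ n) (a := l) (m := 0)
    ((hderiv l).continuousAt.continuousWithinAt)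
    (fun x _ => hderiv x) (integrableOn_exp_neg_pow n hl) htend
  rw [this]; simp [hG]


lemma integral_Ioi_zero_exp_pow (n : ℕ) :
    ∫ t in Ioi (0:ℝ), Real.exp (-t) * t ^ n = (n.factorial : ℝ) := by
  have := integral_Ioi_exp_pow n (le_refl (0:ℝ))
  rw [this]
  have : ∑ k ∈ Finset.range (n+1), pois 0 k = 1 := by
    rw [Finset.sum_eq_single 0]
    · simp [pois]
    · intro k hk hk0
      simp [pois, zero_pow hk0]
    · intro h; simp at h
  rw [this, mul_one]


lemma log_le_half_sub {r : ℝ} (hr : 1 ≤ r) : Real.log r ≤ (r - r⁻¹)/2 := by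
  set f : ℝ → ℝ := fun x => (x - x⁻¹)/2 - Real.log x with hf
  have hd : ∀ x ∈ Ioi (0:ℝ), HasDerivAt f ((1 + (x^2)⁻¹)/2 - x⁻¹) x := by
    intro x hx
    have h1 : HasDerivAt (fun y : ℝ => (y - y⁻¹)/2) ((1 - -(x^2)⁻¹)/2) x :=
      ((hasDerivAt_id x).sub (hasDerivAt_inv (ne_of_gt hx))).div_const 2
    have h2 : HasDerivAt Real.log x⁻¹ x := Real.hasDerivAt_log (ne_of_gt hx)
    have := h1.sub h2
    refine this.congr_deriv ?_
    ring
  have hmono : MonotoneOn f (Ici (1:ℝ)) := by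
    apply monotoneOn_of_deriv_nonneg (convex_Ici 1)
    · intro x hx
      exact (hd x (mem_Ioi.mpr (lt_of_lt_of_le one_pos hx))).continuousAt.continuousWithinAt
    · intro x hx
      rw [interior_Ici] at hx
      exact (hd x (mem_Ioi.mpr (lt_trans one_pos hx))).differentiableAt.differentiableWithinAt
    · intro x hx
      rw [interior_Ici] at hx
      have h1x : (1:ℝ) < x := hx
      have hx0 : (0:ℝ) < x := lt_trans one_pos h1x
      rw [(hd x hx0).deriv]
      rw [div_sub' (two_ne_zero)]
      apply div_nonneg _ (by norm_num)
      have : (x^2)⁻¹ = x⁻¹ * x⁻¹ := by rw [sq]; rw [mul_inv]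
      have hxi : x⁻¹ ≤ 1 := by
        rw [inv_le_one_iff₀]; right; exact h1x.le
      have hxi0 : 0 < x⁻¹ := inv_pos.mpr hx0
      nlinarith [sq_nonneg (1 - x⁻¹)]
  have := hmono (by norm_num : (1:ℝ) ∈ Ici (1:ℝ)) (mem_Ici.mpr hr) hr
  simp [hf] at this
  linarith

lemma log_diff_ge {a s : ℝ} (ha : 0 < a) (hs : 0 ≤ s) (hsa : s < a) :
    2*s/a ≤ Real.log (a+s) - Real.log (a-s) := by
  set g : ℝ → ℝ := fun y => Real.log (a+y) - Real.log (a-y) - 2*y/a with hg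
  have hd : ∀ y ∈ Ico (0:ℝ) a, HasDerivAt g ((a+y)⁻¹ + (a-y)⁻¹ - 2/a) y := by
    intro y hy
    have hy1 : 0 < a + y := by cases hy with | intro h1 h2 => linarith
    have hy2 : 0 < a - y := by cases hy with | intro h1 h2 => linarith
    have h1 : HasDerivAt (fun y : ℝ => Real.log (a+y)) ((a+y)⁻¹) y := by
      have := (Real.hasDerivAt_log (ne_of_gt hy1)).comp y ((hasDerivAt_const y a).add (hasDerivAt_id y))
      exact this.congr_deriv (by simp)
    have h2 : HasDerivAt (fun y : ℝ => Real.log (a-y)) (-(a-y)⁻¹) y := by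
      have := (Real.hasDerivAt_log (ne_of_gt hy2)).comp y ((hasDerivAt_const y a).sub (hasDerivAt_id y))
      exact this.congr_deriv (by simp)
    have h3 : HasDerivAt (fun y : ℝ => 2*y/a) (2/a) y := by
      have := ((hasDerivAt_id y).const_mul (2:ℝ)).div_const a
      simpa [mul_comm] using this
    have := (h1.sub h2).sub h3
    refine this.congr_deriv ?_
    ring
  have hmono : MonotoneOn g (Ico (0:ℝ) a) := by
    apply monotoneOn_of_deriv_nonneg (convex_Ico 0 a)
    · intro x hx
      exact (hd x hx).continuousAt.continuousWithinAt
    · intro x hx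
      rw [interior_Ico] at hx
      exact (hd x (Ioo_subset_Ico_self hx)).differentiableAt.differentiableWithinAt
    · intro x hx
      rw [interior_Ico] at hx
      have hx' : x ∈ Ico (0:ℝ) a := Ioo_subset_Ico_self hx
      rw [(hd x hx').deriv]
      have h1 : 0 < a + x := by cases hx with | intro h1 h2 => linarith
      have h2 : 0 < a - x := by cases hx with | intro h1 h2 => linarith
      have key : (a+x)⁻¹ + (a-x)⁻¹ = 2*a / ((a+x)*(a-x)) := by
        field_simp; ring
      rw [key]
      rw [div_sub_div _ _ (by positivity : ((a+x)*(a-x)) ≠ 0) (ne_of_gt ha)]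
      apply div_nonneg _ (by positivity)
      nlinarith [sq_nonneg x, mul_pos h1 h2]
    
  have h0 : g 0 = 0 := by simp [hg]
  have := hmono (mem_Ico.mpr ⟨le_refl 0, ha⟩) (mem_Ico.mpr ⟨hs, hsa⟩) hs
  rw [h0] at this
  simp only [hg] at this
  linarith

-- assume base

lemma exp_pow_form {x : ℝ} (hx : 0 < x) (n : ℕ) :
    Real.exp (-x) * x ^ n = Real.exp ((n : ℝ) * Real.log x - x) := by
  rw [Real.exp_sub, Real.exp_nat_mul, Real.exp_log hx, Real.exp_neg]
  ring

lemma contF (n : ℕ) : Continuous (fun t : ℝ => Real.exp (-t) * t ^ n) :=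
  (Real.continuous_exp.comp continuous_neg).mul (continuous_pow n)

lemma B1 (n : ℕ) (hn : 1 ≤ n) :
    (n.factorial : ℝ)/2 ≤ ∫ t in Ioi ((n:ℝ) - 1/3), Real.exp (-t) * t ^ n := by
  set f : ℝ → ℝ := fun t => Real.exp (-t) * t ^ n with hfdef
  set a : ℝ := (n:ℝ) - 1/3 with hadef
  have hn1 : (1:ℝ) ≤ (n:ℝ) := by exact_mod_cast hn
  have ha : 0 < a := by rw [hadef]; linarith
  have hIoc_int : IntegrableOn f (Ioc 0 a) := (contF n).integrableOn_Ioc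
  have hIoi_int : IntegrableOn f (Ioi a) := integrableOn_exp_neg_pow n ha.le
  -- pointwise reflection
  have hpt : ∀ x ∈ Ioc (0:ℝ) a, f x ≤ f (2*a - x) := by
    intro x hx
    obtain ⟨hx0, hxa⟩ := hx
    set s : ℝ := a - x with hsdef
    have hs0 : 0 ≤ s := by rw [hsdef]; linarith
    have hsa : s < a := by rw [hsdef]; linarith
    have h2ax : 2*a - x = a + s := by rw [hsdef]; ring
    have hx' : x = a - s := by rw [hsdef]; ring
    have hfx : f x = Real.exp ((n:ℝ) * Real.log (a - s) - (a - s)) := by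
      rw [hfdef]; simp only []; rw [exp_pow_form hx0]; rw [hx']
    have has0 : 0 < a + s := by linarith
    have hf2 : f (2*a - x) = Real.exp ((n:ℝ) * Real.log (a + s) - (a + s)) := by
      rw [hfdef]; simp only []; rw [h2ax, exp_pow_form has0]
    rw [hfx, hf2]
    apply Real.exp_le_exp.mpr
    have hld := log_diff_ge ha hs0 hsa
    have hna : a ≤ (n:ℝ) := by rw [hadef]; linarith
    have h1 : 2*s ≤ (n:ℝ) * (Real.log (a+s) - Real.log (a-s)) := by
      calc 2*s = a * (2*s/a) := by field_simp
      _ ≤ (n:ℝ) * (2*s/a) := by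
          apply mul_le_mul_of_nonneg_right hna (by positivity)
      _ ≤ (n:ℝ) * (Real.log (a+s) - Real.log (a-s)) := by
          apply mul_le_mul_of_nonneg_left hld (by positivity)
    linarith
  have h1 : ∫ x in Ioc (0:ℝ) a, f x ≤ ∫ x in Ioc (0:ℝ) a, f (2*a - x) := by
    apply setIntegral_mono_on hIoc_int _ measurableSet_Ioc hpt
    exact ((contF n).comp (continuous_const.sub continuous_id)).integrableOn_Ioc
  have h2 : ∫ x in Ioc (0:ℝ) a, f (2*a - x) = ∫ x in Ioc a (2*a), f x := by
    have := intervalIntegral.integral_comp_sub_left (a := (0:ℝ)) (b := a) f (2*a)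
    rw [intervalIntegral.integral_of_le ha.le] at this
    rw [show 2*a - a = a by ring, show 2*a - 0 = 2*a by ring] at this
    rw [intervalIntegral.integral_of_le (by linarith)] at this
    exact this
  have h3 : ∫ x in Ioc a (2*a), f x ≤ ∫ x in Ioi a, f x := by
    apply setIntegral_mono_set hIoi_int
    · apply (ae_restrict_iff' measurableSet_Ioi).mpr
      apply ae_of_all
      intro x hx
      have hx0 : 0 < x := lt_trans ha hx
      rw [hfdef]; positivity
    · exact HasSubset.Subset.eventuallyLE (Ioc_subset_Ioi_self)
  have htot : (n.factorial : ℝ) = (∫ x in Ioc (0:ℝ) a, f x) + ∫ x in Ioi a, f x := by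
    rw [← integral_Ioi_zero_exp_pow n, ← setIntegral_union (Ioc_disjoint_Ioi le_rfl)
      measurableSet_Ioi hIoc_int hIoi_int, Ioc_union_Ioi_eq_Ioi ha.le]
  linarith


lemma B2 (n : ℕ) :
    ∫ t in Ioi ((n:ℝ) + 1 + Real.log 2), Real.exp (-t) * t ^ n ≤ (n.factorial : ℝ)/2 := by
  set f : ℝ → ℝ := fun t => Real.exp (-t) * t ^ n with hfdef
  set c : ℝ := (n:ℝ) + 1 + Real.log 2 with hcdef
  have hlog2 : 0 ≤ Real.log 2 := Real.log_nonneg one_le_two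
  have hc1 : (n:ℝ) + 1 ≤ c := by rw [hcdef]; linarith
  have hc0 : 0 < c := by
    have : (0:ℝ) ≤ n := Nat.cast_nonneg n
    linarith
  set φ : ℝ → ℝ := fun u => c^2 / u with hφdef
  have himg : φ '' (Ioo 0 c) = Ioi c := by
    ext t
    constructor
    · rintro ⟨u, ⟨hu0, huc⟩, rfl⟩
      have : c < c^2/u := by
        rw [lt_div_iff₀ hu0]
        nlinarith
      exact this
    · intro ht
      have ht' : c < t := ht
      have ht0 : 0 < t := lt_trans hc0 ht'
      refine ⟨c^2/t, ⟨by positivity, ?_⟩, ?_⟩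
      · rw [div_lt_iff₀ ht0, sq]
        exact mul_lt_mul_of_pos_left ht' hc0
      · rw [hφdef]; field_simp
  have hderivW : ∀ u ∈ Ioo (0:ℝ) c, HasDerivWithinAt φ (-(c^2/u^2)) (Ioo 0 c) u := by
    intro u hu
    have hu0 : u ≠ 0 := ne_of_gt hu.1
    have : HasDerivAt φ (-(c^2/u^2)) u := by
      have h := (hasDerivAt_inv hu0).const_mul (c^2)
      have heq : φ = fun y : ℝ => c^2 * y⁻¹ := by
        funext y; simp [hφdef, div_eq_mul_inv]
      rw [heq]
      refine h.congr_deriv ?_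
      field_simp
    exact this.hasDerivWithinAt
  have hinj : InjOn φ (Ioo 0 c) := by
    intro u hu v hv h
    rw [hφdef] at h
    simp only [] at h
    have hu0 : u ≠ 0 := ne_of_gt hu.1
    have hv0 : v ≠ 0 := ne_of_gt hv.1
    field_simp at h
    exact h.symm
  have hchg := integral_image_eq_integral_abs_deriv_smul measurableSet_Ioo hderivW hinj f
  rw [himg] at hchg
  have hint_img : IntegrableOn f (Ioi c) := integrableOn_exp_neg_pow n hc0.le
  have hint_s : IntegrableOn (fun u => |(-(c^2/u^2))| • f (φ u)) (Ioo 0 c) := by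
    rw [← integrableOn_image_iff_integrableOn_abs_deriv_smul measurableSet_Ioo hderivW hinj f,
      himg]
    exact hint_img
  have hptw : ∀ u ∈ Ioo (0:ℝ) c, |(-(c^2/u^2))| • f (φ u) ≤ f u := by
    intro u hu
    obtain ⟨hu0, huc⟩ := hu
    have hφu : 0 < c^2/u := by positivity
    rw [smul_eq_mul, abs_neg, abs_of_pos (by positivity : (0:ℝ) < c^2/u^2)]
    set r : ℝ := c / u with hrdef
    have hr1 : 1 < r := by
      rw [hrdef, lt_div_iff₀ hu0, one_mul]; exact huc
    have hL := log_le_half_sub hr1.le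
    -- rewrite everything via exp
    have hfu : f u = Real.exp ((n:ℝ) * Real.log u - u) := by
      rw [hfdef]; simp only []; rw [exp_pow_form hu0]
    have hfφ : f (φ u) = Real.exp ((n:ℝ) * Real.log (c^2/u) - c^2/u) := by
      rw [hfdef, hφdef]; simp only []; rw [exp_pow_form hφu]
    have hc2u : c^2/u^2 = Real.exp (Real.log (c^2/u^2)) := (Real.exp_log (by positivity)).symm
    rw [hfu, hfφ, hc2u, ← Real.exp_add]
    apply Real.exp_le_exp.mpr
    have e1 : Real.log (c^2/u^2) = 2 * Real.log r := by
      rw [show c^2/u^2 = r^2 by rw [hrdef, div_pow], Real.log_pow]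
      norm_num
    have e2 : Real.log (c^2/u) = Real.log u + 2 * Real.log r := by
      rw [hrdef]
      rw [show c^2/u = u * (c/u)^2 by field_simp]
      rw [Real.log_mul (ne_of_gt hu0) (by positivity), Real.log_pow]
      push_cast; ring
    rw [e1, e2]
    have e3 : c^2/u - u = c * (r - r⁻¹) := by
      rw [hrdef]
      field_simp
    have hrr : 0 ≤ r - r⁻¹ := by
      have : r⁻¹ ≤ 1 := by rw [inv_le_one_iff₀]; right; exact hr1.le
      linarith
    have key : (2*(n:ℝ) + 2) * Real.log r ≤ c^2/u - u := by
      rw [e3]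
      calc (2*(n:ℝ) + 2) * Real.log r ≤ (2*(n:ℝ)+2) * ((r - r⁻¹)/2) := by
            apply mul_le_mul_of_nonneg_left hL (by positivity)
      _ = ((n:ℝ)+1) * (r - r⁻¹) := by ring
      _ ≤ c * (r - r⁻¹) := mul_le_mul_of_nonneg_right hc1 hrr
    linarith
  have hmono : ∫ u in Ioo (0:ℝ) c, |(-(c^2/u^2))| • f (φ u) ≤ ∫ u in Ioo (0:ℝ) c, f u :=
    setIntegral_mono_on hint_s (((contF n).integrableOn_Ioc).mono_set Ioo_subset_Ioc_self) measurableSet_Ioo hptw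
  have hIci : ∫ u in Ici c, f u = ∫ u in Ioi c, f u := integral_Ici_eq_integral_Ioi
  have htot : (n.factorial : ℝ) = (∫ u in Ioo (0:ℝ) c, f u) + ∫ u in Ioi c, f u := by
    rw [← integral_Ioi_zero_exp_pow n, ← Ioo_union_Ici_eq_Ioi hc0,
      setIntegral_union (by simp only [Set.disjoint_left, mem_Ioo, mem_Ici]; rintro x ⟨h1, h2⟩; exact not_le.mpr h2) measurableSet_Ici
        (((contF n).integrableOn_Ioc).mono_set Ioo_subset_Ioc_self) ((integrableOn_Ici_iff_integrableOn_Ioi).mpr hint_img), hIci]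
  have : ∫ u in Ioi c, f u ≤ ∫ u in Ioo (0:ℝ) c, f u := by
    rw [hchg]; exact hmono
  linarith

lemma Fn_lower (n : ℕ) (hn : 1 ≤ n) :
    (1:ℝ)/2 ≤ ∑ k ∈ Finset.range (n+1), pois ((n:ℝ) - 1/3) k := by
  have hn1 : (1:ℝ) ≤ (n:ℝ) := by exact_mod_cast hn
  have h0 : (0:ℝ) ≤ (n:ℝ) - 1/3 := by linarith
  have hid := integral_Ioi_exp_pow n h0
  have hb := B1 n hn
  rw [hid] at hb
  have hfac : (0:ℝ) < n.factorial := by exact_mod_cast Nat.factorial_pos n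
  have := (mul_le_mul_iff_right₀ hfac).mp (by linarith : (n.factorial:ℝ) * (1/2)
    ≤ (n.factorial:ℝ) * ∑ k ∈ Finset.range (n+1), pois ((n:ℝ) - 1/3) k)
  linarith

lemma Fn_upper (n : ℕ) :
    ∑ k ∈ Finset.range (n+1), pois ((n:ℝ) + 1 + Real.log 2) k ≤ 1/2 := by
  have hlog2 : 0 ≤ Real.log 2 := Real.log_nonneg one_le_two
  have h0 : (0:ℝ) ≤ (n:ℝ) + 1 + Real.log 2 := by
    have : (0:ℝ) ≤ (n:ℝ) := Nat.cast_nonneg n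
    linarith
  have hid := integral_Ioi_exp_pow n h0
  have hb := B2 n
  rw [hid] at hb
  have hfac : (0:ℝ) < n.factorial := by exact_mod_cast Nat.factorial_pos n
  have := (mul_le_mul_iff_right₀ hfac).mp (by linarith : (n.factorial:ℝ) *
    (∑ k ∈ Finset.range (n+1), pois ((n:ℝ) + 1 + Real.log 2) k) ≤ (n.factorial:ℝ) * (1/2))
  linarith

lemma hasDerivAt_J (m : ℕ) (c₀ : ℝ) (u : ℝ) :
    HasDerivAt (fun v => (∑ k ∈ Finset.range (m+1), pois (c₀ + v) k) + v * pois (c₀ + v) (m+1))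
      ((1 - u) * (pois (c₀+u) (m+1) - pois (c₀+u) m)) u := by
  have hshift : HasDerivAt (fun v : ℝ => c₀ + v) 1 u := by
    exact ((hasDerivAt_const u c₀).add (hasDerivAt_id u)).congr_deriv (by simp)
  have h1 := (hasDerivAt_sumPois m (c₀+u)).comp u hshift
  have h2 := (hasDerivAt_pois_succ (c₀+u) m).comp u hshift
  have h3 := (hasDerivAt_id u).mul h2
  have h := h1.add h3
  refine h.congr_deriv ?_
  simp only [id_eq, Function.comp_apply]
  ring

/-- generic branch lemma -/
lemma J_mono_le (m : ℕ) (c₀ : ℝ) (hc : (m:ℝ) + 1 ≤ c₀) {u : ℝ} (hu0 : 0 ≤ u) (hu1 : u ≤ 1) :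
    (∑ k ∈ Finset.range (m+1), pois (c₀ + u) k) + u * pois (c₀ + u) (m+1)
      ≤ ∑ k ∈ Finset.range (m+2), pois (c₀ + 1) k := by
  set J : ℝ → ℝ := fun v =>
    (∑ k ∈ Finset.range (m+1), pois (c₀ + v) k) + v * pois (c₀ + v) (m+1) with hJ
  have hmono : MonotoneOn J (Icc 0 1) := by
    apply monotoneOn_of_deriv_nonneg (convex_Icc 0 1)
    · intro x hx; exact (hasDerivAt_J m c₀ x).continuousAt.continuousWithinAt
    · intro x hx; exact (hasDerivAt_J m c₀ x).differentiableAt.differentiableWithinAt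
    · intro x hx
      rw [interior_Icc] at hx
      rw [(hasDerivAt_J m c₀ x).deriv]
      have hl0 : (0:ℝ) ≤ c₀ + x := by
        have : (0:ℝ) ≤ (m:ℝ) := Nat.cast_nonneg m
        have := hx.1
        nlinarith
      have hstep : pois (c₀+x) m ≤ pois (c₀+x) (m+1) := by
        rw [pois_succ]
        have h1 : (1:ℝ) ≤ (c₀+x)/(m+1) := by
          rw [le_div_iff₀ (by positivity)]
          have := hx.1
          nlinarith
        nlinarith [pois_nonneg hl0 m]
      have := hx.2
      nlinarith
  have h01 : (0:ℝ) ∈ Icc (0:ℝ) 1 := by constructor <;> norm_num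
  have := hmono (mem_Icc.mpr ⟨hu0, hu1⟩) (mem_Icc.mpr ⟨zero_le_one, le_refl 1⟩) hu1
  have hJ1 : J 1 = ∑ k ∈ Finset.range (m+2), pois (c₀ + 1) k := by
    rw [hJ]
    simp only [one_mul]
    rw [Finset.sum_range_succ (n := m+1), Finset.sum_range_succ (n := m)]
  rw [hJ1] at this
  exact this

lemma J_anti_ge (m : ℕ) (c₀ : ℝ) (hc : c₀ + 1 ≤ (m:ℝ) + 1) {u : ℝ} (hu1 : u ≤ 1)
    (hpos : 0 < c₀ + u) :
    ∑ k ∈ Finset.range (m+2), pois (c₀ + 1) k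
      ≤ (∑ k ∈ Finset.range (m+1), pois (c₀ + u) k) + u * pois (c₀ + u) (m+1) := by
  set J : ℝ → ℝ := fun v =>
    (∑ k ∈ Finset.range (m+1), pois (c₀ + v) k) + v * pois (c₀ + v) (m+1) with hJ
  have hanti : AntitoneOn J (Icc u 1) := by
    apply antitoneOn_of_deriv_nonpos (convex_Icc u 1)
    · intro x hx; exact (hasDerivAt_J m c₀ x).continuousAt.continuousWithinAt
    · intro x hx; exact (hasDerivAt_J m c₀ x).differentiableAt.differentiableWithinAt
    · intro x hx
      rw [interior_Icc] at hx
      rw [(hasDerivAt_J m c₀ x).deriv]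
      have hl0 : (0:ℝ) ≤ c₀ + x := by
        have := hx.1; linarith
      have hstep : pois (c₀+x) (m+1) ≤ pois (c₀+x) m := by
        rw [pois_succ]
        have h1 : (c₀+x)/(m+1) ≤ 1 := by
          rw [div_le_one (by positivity)]
          have := hx.2
          linarith
        nlinarith [pois_nonneg hl0 m]
      have := hx.2
      nlinarith
  have := hanti (mem_Icc.mpr ⟨le_refl u, hu1⟩) (mem_Icc.mpr ⟨hu1, le_refl 1⟩) hu1
  have hJ1 : J 1 = ∑ k ∈ Finset.range (m+2), pois (c₀ + 1) k := by
    rw [hJ]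
    simp only [one_mul]
    rw [Finset.sum_range_succ (n := m+1), Finset.sum_range_succ (n := m)]
  rw [hJ1] at this
  exact this

/-- Key upper claim: `F_Z(λ + 4/3) ≥ 1/2`. -/
lemma claimU (n : ℕ) (hn : 1 ≤ n) {u : ℝ} (hu1 : u ≤ 1) (hl : 0 < (n:ℝ) + u - 4/3) :
    (1:ℝ)/2 ≤ (∑ k ∈ Finset.range n, pois ((n:ℝ) + u - 4/3) k)
      + u * pois ((n:ℝ) + u - 4/3) n := by
  obtain ⟨m, rfl⟩ : ∃ m, n = m + 1 := ⟨n - 1, (Nat.succ_pred_eq_of_pos hn).symm⟩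
  have hcast : ((m+1 : ℕ):ℝ) = (m:ℝ) + 1 := by push_cast; ring
  set c₀ : ℝ := ((m+1:ℕ):ℝ) - 4/3 with hc₀
  have h1 : c₀ + 1 ≤ (m:ℝ) + 1 := by rw [hc₀, hcast]; linarith
  have h2 : 0 < c₀ + u := by rw [hc₀]; linarith
  have := J_anti_ge m c₀ h1 hu1 h2
  have hlow := Fn_lower (m+1) (Nat.le_add_left 1 m)
  have hceq : c₀ + 1 = ((m+1:ℕ):ℝ) - 1/3 := by rw [hc₀]; ring
  rw [hceq] at this
  calc (1:ℝ)/2 ≤ ∑ k ∈ Finset.range (m+2), pois (((m+1:ℕ):ℝ) - 1/3) k := hlow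
  _ ≤ _ := by
      have harg : ((m+1:ℕ):ℝ) + u - 4/3 = c₀ + u := by rw [hc₀]; ring
      rw [harg]
      exact this

/-- Key lower claim: `F_Z(λ - log 2) ≤ 1/2` where `λ = n + u + log 2`. -/
lemma claimL (n : ℕ) {u : ℝ} (hu0 : 0 ≤ u) (hu1 : u ≤ 1) :
    (∑ k ∈ Finset.range n, pois ((n:ℝ) + u + Real.log 2) k)
      + u * pois ((n:ℝ) + u + Real.log 2) n ≤ 1/2 := by
  cases n with
  | zero =>
      simp only [Nat.cast_zero, zero_add, Finset.range_zero, Finset.sum_empty]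
      have : pois (u + Real.log 2) 0 = Real.exp (-u) * (1/2) := by
        unfold pois
        simp only [pow_zero, Nat.factorial_zero, Nat.cast_one, mul_one, div_one]
        rw [neg_add, Real.exp_add, Real.exp_neg (Real.log 2), Real.exp_log two_pos]
        ring
      rw [this]
      have h1 : u * Real.exp (-u) ≤ 1 := by
        rw [Real.exp_neg]
        rw [mul_inv_le_iff₀ (Real.exp_pos u), one_mul]
        have := Real.add_one_le_exp u
        linarith
      calc u * (Real.exp (-u) * (1/2)) = (u * Real.exp (-u)) * (1/2) := by ring
      _ ≤ 1 * (1/2) := by nlinarith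
      _ = 1/2 := by ring
  | succ m =>
      have hcast : ((m+1 : ℕ):ℝ) = (m:ℝ) + 1 := by push_cast; ring
      set c₀ : ℝ := ((m+1:ℕ):ℝ) + Real.log 2 with hc₀
      have hlog2 : 0 ≤ Real.log 2 := Real.log_nonneg one_le_two
      have h1 : (m:ℝ) + 1 ≤ c₀ := by rw [hc₀, hcast]; linarith
      have harg : ((m+1:ℕ):ℝ) + u + Real.log 2 = c₀ + u := by rw [hc₀]; ring
      rw [harg]
      have := J_mono_le m c₀ h1 hu0 hu1
      have hup := Fn_upper (m+1)
      have hceq : c₀ + 1 = ((m+1:ℕ):ℝ) + 1 + Real.log 2 := by rw [hc₀]; ring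
      rw [hceq] at this
      exact le_trans this hup

lemma poisson_singleton {l : ℝ} (hl : 0 < l) (k : ℕ) :
    (poissonMeasure l.toNNReal) {k} = ENNReal.ofReal (pois l k) := by
  rw [poissonMeasure_singleton]
  congr 1
  unfold pois
  rw [Real.coe_toNNReal _ hl.le]

lemma measurable_addfn : Measurable (fun p : ℝ × ℝ => p.1 + p.2) :=
  measurable_fst.add measurable_snd

lemma zMeasure_tsum {l : ℝ} (hl : 0 < l) (t : ℝ) :
    zMeasure l (Iic t)
      = ∑' k : ℕ, volume (Iic (t - (k:ℝ)) ∩ Ioo (0:ℝ) 1) * ENNReal.ofReal (pois l k) := by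
  rw [zMeasure, Measure.map_apply measurable_addfn measurableSet_Iic]
  have hpre : MeasurableSet ((fun p : ℝ × ℝ => p.1 + p.2) ⁻¹' (Iic t)) :=
    measurable_addfn measurableSet_Iic
  rw [Measure.prod_apply hpre]
  rw [lintegral_map (measurable_measure_prodMk_left hpre) measurable_from_nat]
  rw [lintegral_countable']
  apply tsum_congr
  intro k
  rw [poisson_singleton hl k]
  congr 1
  have hsec : (Prod.mk ((k:ℕ):ℝ) ⁻¹' ((fun p : ℝ × ℝ => p.1 + p.2) ⁻¹' (Iic t)))
      = Iic (t - (k:ℝ)) := by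
    ext u
    simp only [mem_preimage, mem_Iic]
    constructor
    · intro h; linarith
    · intro h; linarith
  rw [hsec, Measure.restrict_apply measurableSet_Iic]

lemma zMeasure_Iic_neg {l : ℝ} (hl : 0 < l) {x : ℝ} (hx : x < 0) :
    zMeasure l (Iic x) = 0 := by
  rw [zMeasure_tsum hl]
  apply ENNReal.tsum_eq_zero.mpr
  intro k
  have : Iic (x - (k:ℝ)) ∩ Ioo (0:ℝ) 1 = ∅ := by
    ext u
    simp only [mem_inter_iff, mem_Iic, mem_Ioo, mem_empty_iff_false, iff_false]
    rintro ⟨h1, h2, h3⟩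
    have : (0:ℝ) ≤ (k:ℝ) := Nat.cast_nonneg k
    linarith
  rw [this]
  simp

lemma zMeasure_Iic_eq {l : ℝ} (hl : 0 < l) {x : ℝ} (hx : 0 ≤ x) :
    zMeasure l (Iic x) = ENNReal.ofReal ((∑ k ∈ Finset.range ⌊x⌋₊, pois l k)
      + (x - (⌊x⌋₊:ℝ)) * pois l ⌊x⌋₊) := by
  set n := ⌊x⌋₊ with hn
  have hxn : (n:ℝ) ≤ x := Nat.floor_le hx
  have hxn1 : x < (n:ℝ) + 1 := Nat.lt_floor_add_one x
  rw [zMeasure_tsum hl]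
  have hterm : ∀ k : ℕ, volume (Iic (x - (k:ℝ)) ∩ Ioo (0:ℝ) 1) * ENNReal.ofReal (pois l k)
      = if k < n then ENNReal.ofReal (pois l k)
        else if k = n then ENNReal.ofReal (x - (n:ℝ)) * ENNReal.ofReal (pois l n) else 0 := by
    intro k
    rcases lt_trichotomy k n with hk | hk | hk
    · rw [if_pos hk]
      have hk1 : (k:ℝ) + 1 ≤ (n:ℝ) := by exact_mod_cast Nat.succ_le_of_lt hk
      have : Iic (x - (k:ℝ)) ∩ Ioo (0:ℝ) 1 = Ioo (0:ℝ) 1 := by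
        apply inter_eq_self_of_subset_right
        intro u hu
        simp only [mem_Iic]
        have := hu.2
        linarith
      rw [this, Real.volume_Ioo]
      norm_num
    · rw [if_neg (by omega), if_pos hk, hk]
      have : Iic (x - (n:ℝ)) ∩ Ioo (0:ℝ) 1 = Ioc (0:ℝ) (x - (n:ℝ)) := by
        ext u
        simp only [mem_inter_iff, mem_Iic, mem_Ioo, mem_Ioc]
        constructor
        · rintro ⟨h1, h2, h3⟩; exact ⟨h2, h1⟩
        · rintro ⟨h1, h2⟩
          refine ⟨h2, h1, ?_⟩
          linarith
      rw [this, Real.volume_Ioc, sub_zero]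
    · rw [if_neg (by omega), if_neg (by omega)]
      have hk1 : (n:ℝ) + 1 ≤ (k:ℝ) := by exact_mod_cast Nat.succ_le_of_lt hk
      have : Iic (x - (k:ℝ)) ∩ Ioo (0:ℝ) 1 = ∅ := by
        ext u
        simp only [mem_inter_iff, mem_Iic, mem_Ioo, mem_empty_iff_false, iff_false]
        rintro ⟨h1, h2, h3⟩
        linarith
      rw [this]
      simp
  rw [tsum_congr hterm]
  rw [tsum_eq_sum (s := Finset.range (n+1)) (by
    intro k hk
    have : ¬ k < n ∧ k ≠ n := by
      constructor <;> [skip; skip] <;> (simp only [Finset.mem_range] at hk; omega)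
    rw [if_neg this.1, if_neg this.2])]
  rw [Finset.sum_range_succ]
  have hsum1 : ∀ k ∈ Finset.range n,
      (if k < n then ENNReal.ofReal (pois l k)
        else if k = n then ENNReal.ofReal (x - (n:ℝ)) * ENNReal.ofReal (pois l n) else 0)
      = ENNReal.ofReal (pois l k) := by
    intro k hk
    simp only [Finset.mem_range] at hk
    rw [if_pos hk]
  rw [Finset.sum_congr rfl hsum1]
  rw [if_neg (lt_irrefl n), if_pos rfl]
  rw [ENNReal.ofReal_add (Finset.sum_nonneg (fun k _ => pois_nonneg hl.le k))
    (mul_nonneg (by linarith) (pois_nonneg hl.le n))]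
  rw [ENNReal.ofReal_sum_of_nonneg (fun k _ => pois_nonneg hl.le k)]
  rw [ENNReal.ofReal_mul (by linarith)]

lemma zMeasure_gap {l : ℝ} (hl : 0 < l) {t t₀ : ℝ} (ht : 0 ≤ t) (htt : t < t₀) :
    ∃ δ : ℝ≥0∞, 0 < δ ∧ zMeasure l (Iic t) + δ ≤ zMeasure l (Iic t₀) := by
  set k := ⌊t⌋₊ with hk
  have htk : (k:ℝ) ≤ t := Nat.floor_le ht
  have htk1 : t < (k:ℝ) + 1 := Nat.lt_floor_add_one t
  set β := min t₀ ((k:ℝ)+1) with hβ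
  have hβt : t < β := lt_min htt htk1
  have hβk : β - (k:ℝ) ≤ 1 := by
    have : β ≤ (k:ℝ)+1 := min_le_right _ _
    linarith
  have hβt₀ : β ≤ t₀ := min_le_left _ _
  refine ⟨ENNReal.ofReal (pois l k) * ENNReal.ofReal (β - t), ?_, ?_⟩
  · apply ENNReal.mul_pos
    · simp only [ne_eq, ENNReal.ofReal_eq_zero, not_le]
      exact pois_pos hl k
    · simp only [ne_eq, ENNReal.ofReal_eq_zero, not_le]
      linarith
  · have hsub : Iic t ∪ Ioc t β ⊆ Iic t₀ := by
      rw [Set.Iic_union_Ioc_eq_Iic hβt.le]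
      exact Iic_subset_Iic.mpr hβt₀
    have hdisj : Disjoint (Iic t) (Ioc t β) := by
      apply Set.disjoint_left.mpr
      rintro x hx ⟨h1, h2⟩
      exact absurd hx (not_le.mpr h1)
    have hunion : zMeasure l (Iic t) + zMeasure l (Ioc t β) ≤ zMeasure l (Iic t₀) := by
      rw [← measure_union hdisj measurableSet_Ioc]
      exact measure_mono hsub
    have hrect : ENNReal.ofReal (pois l k) * ENNReal.ofReal (β - t)
        ≤ zMeasure l (Ioc t β) := by
      rw [zMeasure, Measure.map_apply measurable_addfn measurableSet_Ioc]
      have hss : ({((k:ℕ):ℝ)} ×ˢ Ioo (t - (k:ℝ)) (β - (k:ℝ)))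
          ⊆ ((fun p : ℝ × ℝ => p.1 + p.2) ⁻¹' (Ioc t β)) := by
        rintro ⟨y, v⟩ ⟨hy, hv⟩
        simp only [mem_singleton_iff] at hy
        simp only [mem_preimage, mem_Ioc]
        obtain ⟨hv1, hv2⟩ := hv
        subst hy
        constructor <;> [linarith; linarith]
      refine le_trans ?_ (measure_mono hss)
      rw [Measure.prod_prod]
      have h1 : (Measure.map (Nat.cast : ℕ → ℝ) (poissonMeasure l.toNNReal)) {((k:ℕ):ℝ)}
          = ENNReal.ofReal (pois l k) := by
        rw [Measure.map_apply measurable_from_nat (measurableSet_singleton _)]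
        have : ((Nat.cast : ℕ → ℝ) ⁻¹' {((k:ℕ):ℝ)}) = {k} := by
          ext j; simp [Nat.cast_inj]
        rw [this]
        exact poisson_singleton hl k
      have h2 : (volume.restrict (Ioo (0:ℝ) 1)) (Ioo (t - (k:ℝ)) (β - (k:ℝ)))
          = ENNReal.ofReal (β - t) := by
        rw [Measure.restrict_apply measurableSet_Ioo]
        have : Ioo (t - (k:ℝ)) (β - (k:ℝ)) ∩ Ioo (0:ℝ) 1 = Ioo (t - (k:ℝ)) (β - (k:ℝ)) := by
          apply inter_eq_self_of_subset_left
          rintro v ⟨hv1, hv2⟩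
          constructor <;> [linarith; linarith]
        rw [this, Real.volume_Ioo]
        congr 1
        ring
      rw [h1, h2]
    calc zMeasure l (Iic t) + ENNReal.ofReal (pois l k) * ENNReal.ofReal (β - t)
        ≤ zMeasure l (Iic t) + zMeasure l (Ioc t β) := by
          exact add_le_add_right hrect _
    _ ≤ zMeasure l (Iic t₀) := hunion

lemma half_eq : (1 : ℝ≥0∞) / 2 = ENNReal.ofReal (1/2 : ℝ) := by
  rw [ENNReal.ofReal_div_of_pos two_pos, ENNReal.ofReal_one, ENNReal.ofReal_ofNat]

lemma mem_S_nonneg {l : ℝ} (hl : 0 < l) {t : ℝ}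
    (ht : (1 : ℝ≥0∞) / 2 ≤ zMeasure l (Set.Iic t)) : 0 ≤ t := by
  by_contra h
  rw [zMeasure_Iic_neg hl (not_le.mp h)] at ht
  simp [ENNReal.div_eq_zero_iff] at ht

lemma upper_mem {l : ℝ} (hl : 0 < l) :
    (1 : ℝ≥0∞) / 2 ≤ zMeasure l (Set.Iic (l + 4/3)) := by
  set x : ℝ := l + 4/3 with hx
  have hx0 : (0:ℝ) ≤ x := by rw [hx]; linarith
  set n := ⌊x⌋₊ with hn
  have hxn : (n:ℝ) ≤ x := Nat.floor_le hx0
  have hxn1 : x < (n:ℝ) + 1 := Nat.lt_floor_add_one x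
  have hn1 : 1 ≤ n := by
    apply Nat.le_floor
    rw [hx]; push_cast; linarith
  set u : ℝ := x - n with hu
  have hu1 : u ≤ 1 := by rw [hu]; linarith
  have harg : (n:ℝ) + u - 4/3 = l := by rw [hu, hx]; ring
  have hpos : 0 < (n:ℝ) + u - 4/3 := by rw [harg]; exact hl
  have hclaim := claimU n hn1 hu1 hpos
  rw [harg] at hclaim
  rw [zMeasure_Iic_eq hl hx0, half_eq]
  exact ENNReal.ofReal_le_ofReal (by rw [← hn, ← hu]; exact hclaim)

theorem median_jittered_poisson_bounds (l : ℝ) (hl : 0 < l) :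
    -Real.log 2 ≤ medianZ l - l ∧ medianZ l - l ≤ 4 / 3 := by
  set S := {t : ℝ | (1 : ℝ≥0∞) / 2 ≤ zMeasure l (Set.Iic t)} with hS
  have hmem : (l + 4/3) ∈ S := upper_mem hl
  have hne : S.Nonempty := ⟨l + 4/3, hmem⟩
  have hbdd : BddBelow S := ⟨0, fun t ht => mem_S_nonneg hl ht⟩
  constructor
  · -- lower bound
    have hlow : l - Real.log 2 ≤ sInf S := by
      apply le_csInf hne
      intro t ht
      by_contra hcon
      push_neg at hcon
      set t₀ : ℝ := l - Real.log 2 with ht₀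
      have ht0 : 0 ≤ t := mem_S_nonneg hl ht
      have ht₀0 : 0 ≤ t₀ := le_trans ht0 (le_of_lt hcon)
      -- claim L at t₀
      set n := ⌊t₀⌋₊ with hn
      have hxn : (n:ℝ) ≤ t₀ := Nat.floor_le ht₀0
      have hxn1 : t₀ < (n:ℝ) + 1 := Nat.lt_floor_add_one t₀
      set u : ℝ := t₀ - n with hu
      have hu0 : 0 ≤ u := by rw [hu]; linarith
      have hu1 : u ≤ 1 := by rw [hu]; linarith
      have harg : (n:ℝ) + u + Real.log 2 = l := by rw [hu, ht₀]; ring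
      have hclaim := claimL n hu0 hu1
      rw [harg] at hclaim
      have hup : zMeasure l (Iic t₀) ≤ (1:ℝ≥0∞)/2 := by
        rw [zMeasure_Iic_eq hl ht₀0, half_eq]
        apply ENNReal.ofReal_le_ofReal
        rw [← hn]
        exact hclaim
      obtain ⟨δ, hδ0, hδ⟩ := zMeasure_gap hl ht0 hcon
      have h1 : (1:ℝ≥0∞)/2 + δ ≤ (1:ℝ≥0∞)/2 + 0 := by
        rw [add_zero]
        calc (1:ℝ≥0∞)/2 + δ ≤ zMeasure l (Iic t) + δ := add_le_add_left ht δ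
        _ ≤ zMeasure l (Iic t₀) := hδ
        _ ≤ (1:ℝ≥0∞)/2 := hup
      have h2 : δ ≤ 0 := by
        rwa [ENNReal.add_le_add_iff_left (by norm_num : (1:ℝ≥0∞)/2 ≠ ⊤)] at h1
      exact absurd (le_antisymm h2 zero_le) (ne_of_gt hδ0)
    have : l - Real.log 2 ≤ medianZ l := hlow
    linarith
  · have : medianZ l ≤ l + 4/3 := csInf_le hbdd hmem
    linarith
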